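/- Let p be a complex polynomial of degree d ≥ 2 with Böttcher coordinate φ_p on {|z| > R} satisfying φ_p(p^n(z)) = (φ_p(z))^{d^n} for all n ≥ 1 and all |z| > R, with φ_p(z)/z → b ≠ 0 and φ_p'(z) → b as |z| → ∞. Then for every z with |z| > R whose forward orbit stays in {|w| > R} and tends to infinity, lim_{n→∞} d^{-n} log|(p^n)'(z)| = lim_{n→∞} d^{-n} log|p^n(z)|, i.e., the two limits exist and are equal. -/

import Mathlib

open Matrix Polynomial Filter

noncomputable section


private lemma deriv_multiset_prod_eval (c : ℂ) (M : Multiset ℂ) :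
    (∀ ρ ∈ M, ρ ≠ c) →
    (Polynomial.derivative (M.map fun ρ => Polynomial.X - Polynomial.C ρ).prod).eval c
      = ((M.map fun ρ => Polynomial.X - Polynomial.C ρ).prod).eval c
        * (M.map fun ρ => (c - ρ)⁻¹).sum := by
  induction M using Multiset.induction_on with
  | empty => intro _; simp
  | cons ρ M ih =>
    intro h
    have hρ : ρ ≠ c := h ρ (Multiset.mem_cons_self _ _)
    have hM : ∀ σ ∈ M, σ ≠ c := fun σ hσ => h σ (Multiset.mem_cons_of_mem hσ)
    have hcρ : c - ρ ≠ 0 := sub_ne_zero.2 (Ne.symm hρ)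
    simp only [Multiset.map_cons, Multiset.prod_cons, Multiset.sum_cons,
      Polynomial.derivative_mul, Polynomial.derivative_sub, Polynomial.derivative_X,
      Polynomial.derivative_C, sub_zero, one_mul, Polynomial.eval_add, Polynomial.eval_mul,
      Polynomial.eval_sub, Polynomial.eval_X, Polynomial.eval_C, ih hM]
    field_simp

/-- For points escaping to infinity, d⁻ⁿ log|(pⁿ)′(z)| and d⁻ⁿ log|pⁿ(z)| have the
same limit. -/
theorem stmt19 (p : Polynomial ℂ) (d : ℕ) (hd : 2 ≤ d) (hdeg : p.natDegree = d)
    (R : ℝ) (hR : 1 < R) (φ : ℂ → ℂ) (b : ℂ) (hb : b ≠ 0)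
    (hφdiff : DifferentiableOn ℂ φ {z : ℂ | R < ‖z‖})
    (hφeq : ∀ n : ℕ, 1 ≤ n → ∀ z : ℂ, R < ‖z‖ →
      φ ((fun w => p.eval w)^[n] z) = φ z ^ (d ^ n))
    (hratio : Tendsto (fun z : ℂ => φ z / z) (Bornology.cobounded ℂ) (nhds b))
    (hderφ : Tendsto (deriv φ) (Bornology.cobounded ℂ) (nhds b))
    (z : ℂ) (hz : R < ‖z‖)
    (horb : ∀ n : ℕ, R < ‖(fun w => p.eval w)^[n] z‖)
    (hinf : Tendsto (fun n : ℕ => ‖(fun w => p.eval w)^[n] z‖) atTop atTop) :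
    ∃ L : ℝ,
      Tendsto (fun n : ℕ =>
          Real.log (‖deriv ((fun w => p.eval w)^[n]) z‖) / (d : ℝ) ^ n)
        atTop (nhds L) ∧
      Tendsto (fun n : ℕ =>
          Real.log (‖(fun w => p.eval w)^[n] z‖) / (d : ℝ) ^ n)
        atTop (nhds L) := by
  classical
  set f : ℂ → ℂ := fun w => p.eval w with hfdef
  have habs_b : 0 < ‖b‖ := norm_pos_iff.mpr hb
  have hd1 : (1:ℝ) < (d:ℝ) := by exact_mod_cast lt_of_lt_of_le one_lt_two hd
  have hdpos : ∀ n : ℕ, (0:ℝ) < (d:ℝ)^n := fun n => pow_pos (lt_trans zero_lt_one hd1) n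
  have hopen : IsOpen {w : ℂ | R < ‖w‖} :=
    isOpen_lt continuous_const continuous_norm
  have hφAt : ∀ y : ℂ, R < ‖y‖ → DifferentiableAt ℂ φ y := fun y hy =>
    hφdiff.differentiableAt (hopen.mem_nhds hy)
  have hfd : Differentiable ℂ f := p.differentiable
  have hFd : ∀ n : ℕ, Differentiable ℂ (f^[n]) := fun n => hfd.iterate n
  have habsWpos : ∀ n : ℕ, 0 < ‖f^[n] z‖ := fun n =>
    lt_trans (lt_trans zero_lt_one hR) (horb n)
  -- the orbit tends to the cobounded filter
  have hcob : Tendsto (fun n : ℕ => f^[n] z) atTop (Bornology.cobounded ℂ) := by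
    rw [← tendsto_norm_atTop_iff_cobounded]
    exact hinf
  have hrat : Tendsto (fun n : ℕ => φ (f^[n] z) / (f^[n] z)) atTop (nhds b) := hratio.comp hcob
  have hder : Tendsto (fun n : ℕ => deriv φ (f^[n] z)) atTop (nhds b) := hderφ.comp hcob
  have hratabs : Tendsto (fun n : ℕ => ‖φ (f^[n] z) / (f^[n] z)‖) atTop
      (nhds (‖b‖)) := (continuous_norm.tendsto b).comp hrat
  have habsφ : Tendsto (fun n : ℕ => ‖φ (f^[n] z)‖) atTop atTop := by
    have h1 : Tendsto (fun n : ℕ => ‖φ (f^[n] z) / (f^[n] z)‖ *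
        ‖f^[n] z‖) atTop atTop := hratabs.pos_mul_atTop habs_b hinf
    refine h1.congr (fun n => ?_)
    rw [norm_div, div_mul_cancel₀ _ (ne_of_gt (habsWpos n))]
  have hφW : ∀ n : ℕ, 1 ≤ n → φ (f^[n] z) = φ z ^ d ^ n := fun n hn => hφeq n hn z hz
  set r : ℝ := ‖φ z‖ with hrdef
  have hr1 : 1 < r := by
    by_contra hcon
    push_neg at hcon
    obtain ⟨n, hn2, hn1⟩ := ((habsφ.eventually_ge_atTop 2).and (eventually_ge_atTop 1)).exists
    have hle : ‖φ (f^[n] z)‖ ≤ 1 := by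
      rw [hφW n hn1, norm_pow]
      exact pow_le_one₀ (norm_nonneg _) hcon
    linarith
  have hrpos : 0 < r := lt_trans zero_lt_one hr1
  have hφzne : φ z ≠ 0 := by
    intro h
    rw [h, norm_zero] at hrdef
    rw [hrdef] at hr1
    linarith
  -- ############ second limit ############
  have hlogabsφ : ∀ n : ℕ, 1 ≤ n →
      Real.log (‖φ (f^[n] z)‖) = (d:ℝ)^n * Real.log r := by
    intro n hn
    rw [hφW n hn, norm_pow, Real.log_pow]
    push_cast
    ring
  have hφWabspos : ∀ n : ℕ, 1 ≤ n → 0 < ‖φ (f^[n] z)‖ := by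
    intro n hn
    rw [hφW n hn, norm_pow]
    exact pow_pos hrpos _
  have hABSid : ∀ n : ℕ, 1 ≤ n → Real.log (‖f^[n] z‖) =
      (d:ℝ)^n * Real.log r - Real.log (‖φ (f^[n] z) / f^[n] z‖) := by
    intro n hn
    rw [norm_div, Real.log_div (ne_of_gt (hφWabspos n hn)) (ne_of_gt (habsWpos n)),
      hlogabsφ n hn]
    ring
  have hlogrho : Tendsto (fun n : ℕ => Real.log (‖φ (f^[n] z) / f^[n] z‖)) atTop
      (nhds (Real.log (‖b‖))) :=
    ((Real.continuousAt_log (ne_of_gt habs_b)).tendsto).comp hratabs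
  have hinvd : Tendsto (fun n : ℕ => ((d:ℝ)^n)⁻¹) atTop (nhds 0) :=
    tendsto_inv_atTop_zero.comp (tendsto_pow_atTop_atTop_of_one_lt hd1)
  have target2 : Tendsto (fun n : ℕ =>
      Real.log (‖f^[n] z‖) / (d : ℝ) ^ n) atTop (nhds (Real.log r)) := by
    have h1 : Tendsto (fun n : ℕ => Real.log r -
        Real.log (‖φ (f^[n] z) / f^[n] z‖) * ((d:ℝ)^n)⁻¹)
        atTop (nhds (Real.log r)) := by
      simpa using tendsto_const_nhds.sub (hlogrho.mul hinvd)
    refine h1.congr' ?_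
    filter_upwards [eventually_ge_atTop 1] with n hn
    rw [hABSid n hn]
    have hdn : ((d:ℝ)^n) ≠ 0 := ne_of_gt (hdpos n)
    field_simp
  -- ############ the derivative functional equation ############
  have hstar : ∀ n : ℕ, 1 ≤ n → ∀ y : ℂ, R < ‖y‖ → R < ‖f^[n] y‖ →
      deriv φ (f^[n] y) * deriv (f^[n]) y = (d:ℂ)^n * (φ y) ^ (d^n - 1) * deriv φ y := by
    intro n hn y hy hfy
    have hev : (φ ∘ f^[n]) =ᶠ[nhds y] (fun u => φ u ^ d ^ n) := by
      filter_upwards [hopen.mem_nhds hy] with u hu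
      exact hφeq n hn u hu
    have h1 : deriv (φ ∘ f^[n]) y = deriv φ (f^[n] y) * deriv (f^[n]) y :=
      deriv_comp y (hφAt _ hfy) ((hFd n).differentiableAt)
    have h2 : deriv (fun u => φ u ^ d ^ n) y = ((d^n : ℕ) : ℂ) * (φ y) ^ (d^n - 1) * deriv φ y :=
      (((hφAt y hy).hasDerivAt).pow _).deriv
    rw [← h1, hev.deriv_eq, h2]
    push_cast
    ring
  -- ############ nonvanishing of deriv φ z ############
  have hdCne : (d:ℂ) ≠ 0 := by
    exact_mod_cast (by omega : d ≠ 0)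
  have hne : deriv φ z ≠ 0 := by
    intro hB
    -- Step 1: some orbit point is a critical point of p
    obtain ⟨N, hφ'N, hN1⟩ :=
      (((hder.eventually_ne hb)).and (eventually_ge_atTop 1)).exists
    have hDN : deriv (f^[N]) z = 0 := by
      have h := hstar N hN1 z hz (horb N)
      rw [hB, mul_zero] at h
      rcases mul_eq_zero.1 h with h' | h'
      · exact absurd h' hφ'N
      · exact h'
    obtain ⟨k, hk⟩ : ∃ k, deriv f (f^[k] z) = 0 := by
      have key : ∀ n : ℕ, ∀ y : ℂ, deriv (f^[n]) y = 0 → ∃ k, deriv f (f^[k] y) = 0 := by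
        intro n
        induction n with
        | zero =>
          intro y hy
          rw [Function.iterate_zero] at hy
          rw [deriv_id y] at hy
          exact absurd hy one_ne_zero
        | succ n ih =>
          intro y hy
          rw [Function.iterate_succ] at hy
          rw [deriv_comp y ((hFd n).differentiableAt) (hfd.differentiableAt)] at hy
          rcases mul_eq_zero.1 hy with h' | h'
          · obtain ⟨k, hk⟩ := ih (f y) h'
            exact ⟨k + 1, by rwa [Function.iterate_succ_apply]⟩
          · exact ⟨0, by simpa using h'⟩
      exact key N z hDN
    set c : ℂ := f^[k] z with hcdef
    have hRc : R < ‖c‖ := horb k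
    have hcpos : 0 < ‖c‖ := lt_trans (lt_trans zero_lt_one hR) hRc
    have hpc : (Polynomial.derivative p).eval c = 0 := by
      have h : deriv (fun w => p.eval w) c = 0 := hk
      rwa [Polynomial.deriv] at h
    -- Step 2 (Gauss–Lucas): every value has a p-preimage of modulus at least |c|
    have GLroot : ∀ v : ℂ, ∃ x : ℂ, f x = v ∧ ‖c‖ ≤ ‖x‖ := by
      intro v
      by_contra hcon
      push_neg at hcon
      set q : Polynomial ℂ := p - Polynomial.C v with hqdef
      have hqd : q.natDegree = d := by rw [hqdef, Polynomial.natDegree_sub_C, hdeg]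
      have hq0 : q ≠ 0 := by
        intro h
        rw [h, Polynomial.natDegree_zero] at hqd
        omega
      have hqroot : ∀ ρ : ℂ, ρ ∈ q.roots → ‖ρ‖ < ‖c‖ := by
        intro ρ hρ
        have h1 : q.IsRoot ρ := (Polynomial.mem_roots hq0).1 hρ
        have h2 : f ρ = v := by
          have h3 := h1
          rw [Polynomial.IsRoot, hqdef, Polynomial.eval_sub, Polynomial.eval_C,
            sub_eq_zero] at h3
          exact h3
        exact hcon ρ h2
      have hρne : ∀ ρ ∈ q.roots, ρ ≠ c := by
        intro ρ hρ h
        have h1 := hqroot ρ hρ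
        rw [h] at h1
        exact lt_irrefl _ h1
      obtain ⟨ρ₀, hρ₀⟩ := Complex.exists_root
        (Polynomial.natDegree_pos_iff_degree_pos.1 (by omega : 0 < q.natDegree))
      have hρ₀mem : ρ₀ ∈ q.roots := (Polynomial.mem_roots hq0).2 hρ₀
      have hMne : q.roots ≠ 0 := by
        intro h
        rw [h] at hρ₀mem
        exact absurd hρ₀mem (Multiset.notMem_zero _)
      have hsplit : q = Polynomial.C q.leadingCoeff *
          (q.roots.map fun a => Polynomial.X - Polynomial.C a).prod :=
        (IsAlgClosed.splits q).eq_prod_roots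
      have ha : q.leadingCoeff ≠ 0 := Polynomial.leadingCoeff_ne_zero.2 hq0
      have hPprod : ((q.roots.map fun a => Polynomial.X - Polynomial.C a).prod).eval c ≠ 0 := by
        rw [Polynomial.eval_multiset_prod]
        apply Multiset.prod_ne_zero
        intro h0
        rw [Multiset.map_map] at h0
        obtain ⟨ρ, hρ, hcρ⟩ := Multiset.mem_map.1 h0
        simp only [Function.comp_apply, Polynomial.eval_sub, Polynomial.eval_X,
          Polynomial.eval_C] at hcρ
        exact (sub_ne_zero.2 (Ne.symm (hρne ρ hρ))) hcρ
      set S : ℂ := (q.roots.map fun ρ => (c - ρ)⁻¹).sum with hSdef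
      -- positivity of the real part of c * S
      have htermpos : ∀ ρ : ℂ, ρ ∈ q.roots → 0 < (c * (c - ρ)⁻¹).re := by
        intro ρ hρ
        have hu : c - ρ ≠ 0 := sub_ne_zero.2 (Ne.symm (hρne ρ hρ))
        have key : 0 < (c / (c - ρ)).re := by
          rw [Complex.div_re]
          have hN : 0 < Complex.normSq (c - ρ) := Complex.normSq_pos.2 hu
          rw [← add_div]
          apply div_pos ?_ hN
          have h2 : c.re * (c - ρ).re + c.im * (c - ρ).im
              = Complex.normSq c - (c * (starRingEnd ℂ) ρ).re := by
            simp only [Complex.normSq_apply, Complex.sub_re, Complex.sub_im, Complex.mul_re,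
              Complex.conj_re, Complex.conj_im]
            ring
          rw [h2]
          have h3 : (c * (starRingEnd ℂ) ρ).re ≤ ‖c‖ * ‖ρ‖ := by
            calc (c * (starRingEnd ℂ) ρ).re ≤ ‖c * (starRingEnd ℂ) ρ‖ :=
                  Complex.re_le_norm _
              _ = ‖c‖ * ‖ρ‖ := by rw [norm_mul, Complex.norm_conj]
          have h4 : ‖c‖ * ‖ρ‖ < ‖c‖ * ‖c‖ :=
            mul_lt_mul_of_pos_left (hqroot ρ hρ) hcpos
          have h5 : Complex.normSq c = ‖c‖ * ‖c‖ := by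
            rw [Complex.normSq_eq_norm_sq]; ring
          linarith
        rw [div_eq_mul_inv] at key
        exact key
      have hre : 0 < (c * S).re := by
        have h1 : c * S = ((q.roots.map fun ρ : ℂ => c * (c - ρ)⁻¹)).sum := by
          rw [hSdef]
          exact (Multiset.sum_map_mul_left).symm
        have h2 : (c * S).re = ((q.roots.map fun ρ : ℂ => c * (c - ρ)⁻¹).map Complex.re).sum := by
          rw [h1]
          have h3 := AddMonoidHom.map_multiset_sum Complex.reAddGroupHom
            (q.roots.map fun ρ : ℂ => c * (c - ρ)⁻¹)
          simpa [Complex.coe_reAddGroupHom] using h3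
        rw [h2, Multiset.map_map]
        have h4 := Multiset.sum_lt_sum_of_nonempty (s := q.roots)
          (f := fun _ : ℂ => (0:ℝ)) (g := fun ρ : ℂ => (Complex.re ∘ fun ρ : ℂ => c * (c - ρ)⁻¹) ρ)
          (by simpa using hMne)
          (fun ρ hρ => by simpa using htermpos ρ hρ)
        simpa using h4
      have hS : S ≠ 0 := by
        intro h0
        rw [h0, mul_zero] at hre
        simp at hre
      have hq' : (Polynomial.derivative q).eval c
          = q.leadingCoeff *
            ((((q.roots.map fun a => Polynomial.X - Polynomial.C a).prod).eval c) * S) := by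
        conv_lhs => rw [hsplit]
        rw [Polynomial.derivative_C_mul, Polynomial.eval_mul, Polynomial.eval_C,
          deriv_multiset_prod_eval c q.roots hρne, ← hSdef]
      have hq'p : Polynomial.derivative q = Polynomial.derivative p := by
        rw [hqdef, Polynomial.derivative_sub, Polynomial.derivative_C, sub_zero]
      rw [hq'p, hpc] at hq'
      exact (mul_ne_zero ha (mul_ne_zero hPprod hS)) hq'.symm
    -- Step 3: backward orbit staying outside the disk of radius |c|
    choose g hg1 hg2 using GLroot
    have hx0 : ∀ m : ℕ, f^[m] (g^[m] z) = z := by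
      intro m
      induction m with
      | zero => rfl
      | succ m ih =>
        rw [Function.iterate_succ_apply' (f := g), Function.iterate_succ_apply, hg1, ih]
    have hgc : ∀ m : ℕ, 1 ≤ m → ‖c‖ ≤ ‖g^[m] z‖ := by
      intro m hm
      obtain ⟨m', rfl⟩ : ∃ m', m = m' + 1 := ⟨m - 1, by omega⟩
      rw [Function.iterate_succ_apply']
      exact hg2 _
    have hgR : ∀ m : ℕ, R < ‖g^[m] z‖ := by
      intro m
      cases m with
      | zero => exact hz
      | succ m' => exact lt_of_lt_of_le hRc (hgc (m' + 1) (by omega))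
    have hφg : ∀ m : ℕ, 1 ≤ m → φ (g^[m] z) ^ d ^ m = φ z := by
      intro m hm
      have h := hφeq m hm (g^[m] z) (hgR m)
      rw [hx0 m] at h
      exact h.symm
    have hφgne : ∀ m : ℕ, 1 ≤ m → φ (g^[m] z) ≠ 0 := by
      intro m hm h0
      apply hφzne
      rw [← hφg m hm, h0, zero_pow (pow_ne_zero m (by omega : d ≠ 0))]
    have hφ'g : ∀ m : ℕ, 1 ≤ m → deriv φ (g^[m] z) = 0 := by
      intro m hm
      have h := hstar m hm (g^[m] z) (hgR m) (by rw [hx0 m]; exact hz)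
      rw [hx0 m, hB, zero_mul] at h
      rcases mul_eq_zero.1 h.symm with h' | h'
      · exfalso
        rcases mul_eq_zero.1 h' with h'' | h''
        · exact (pow_ne_zero m hdCne) h''
        · exact (pow_ne_zero _ (hφgne m hm)) h''
      · exact h'
    -- Step 4: injectivity of the backward orbit
    have hxinj : Function.Injective (fun m : ℕ => g^[m + 1] z) := by
      have haux : ∀ m m' : ℕ, m < m' → g^[m + 1] z = g^[m' + 1] z → False := by
        intro m m' hmm' heq
        have h1 := hφg (m + 1) (by omega)
        have h2 := hφg (m' + 1) (by omega)
        rw [← heq] at h2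
        have hune : φ (g^[m + 1] z) ≠ 0 := hφgne (m + 1) (by omega)
        have habs1 : ‖φ (g^[m + 1] z)‖ ^ d ^ (m + 1) = r := by
          rw [hrdef, ← h1, norm_pow]
        have habs2 : ‖φ (g^[m + 1] z)‖ ^ d ^ (m' + 1) = r := by
          rw [hrdef, ← h2, norm_pow]
        have hlt : d ^ (m + 1) < d ^ (m' + 1) :=
          pow_lt_pow_right₀ (by omega : 1 < d) (by omega)
        have htpos : 0 < ‖φ (g^[m + 1] z)‖ := norm_pos_iff.mpr hune
        rcases lt_trichotomy (‖φ (g^[m + 1] z)‖) 1 with ht | ht | ht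
        · have h5 := pow_lt_pow_right_of_lt_one₀ htpos ht hlt
          rw [habs1, habs2] at h5
          exact lt_irrefl _ h5
        · rw [ht, one_pow] at habs1
          rw [← habs1] at hr1
          exact lt_irrefl _ hr1
        · have h5 := pow_lt_pow_right₀ ht hlt
          rw [habs1, habs2] at h5
          exact lt_irrefl _ h5
      intro m m' heq
      by_contra hne'
      rcases Nat.lt_or_ge m m' with h | h
      · exact haux m m' h heq
      · exact haux m' m (by omega) heq.symm
    -- Step 5: the backward orbit is bounded
    obtain ⟨t0, ht0⟩ : ∃ t0 : ℝ, ∀ y : ℂ, t0 ≤ ‖y‖ → dist (φ y / y) b < ‖b‖ / 2 := by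
      have hev : ∀ᶠ y in Bornology.cobounded ℂ, dist (φ y / y) b < ‖b‖ / 2 :=
        Metric.tendsto_nhds.1 hratio _ (by positivity)
      rw [Filter.hasBasis_cobounded_norm.eventually_iff] at hev
      obtain ⟨t0, -, h⟩ := hev
      exact ⟨t0, fun y hy => h hy⟩
    set T : ℝ := max t0 (max 1 (2 * (r + 1) / ‖b‖)) with hT
    have hbig : ∀ y : ℂ, T ≤ ‖y‖ → r < ‖φ y‖ := by
      intro y hy
      have hy' : t0 ≤ ‖y‖ := by
        exact le_trans (le_max_left _ _) hy
      have hdist := ht0 y hy'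
      have hyne : y ≠ 0 := by
        intro h0
        rw [h0, norm_zero] at hy
        have h1 : (1:ℝ) ≤ T := le_trans (le_max_left _ _) (le_max_right _ _)
        linarith
      have h2 : ‖b‖ / 2 < ‖φ y / y‖ := by
        have hnorm : ‖b‖ - ‖φ y / y‖ ≤ dist (φ y / y) b := by
          rw [dist_eq_norm, ← norm_sub_rev]
          exact norm_sub_norm_le _ _
        linarith
      have h3 : ‖φ y‖ = ‖φ y / y‖ * ‖y‖ := by
        rw [norm_div, div_mul_cancel₀]
        exact norm_ne_zero_iff.mpr hyne
      have h4 : 2 * (r + 1) / ‖b‖ ≤ ‖y‖ :=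
        le_trans (le_trans (le_max_right _ _) (le_max_right _ _)) hy
      have h5 : ‖b‖ / 2 * (2 * (r + 1) / ‖b‖) = r + 1 := by
        field_simp
      rw [h3]
      calc r < r + 1 := by linarith
        _ = ‖b‖ / 2 * (2 * (r + 1) / ‖b‖) := h5.symm
        _ ≤ ‖φ y / y‖ * ‖y‖ := by
            apply mul_le_mul (le_of_lt h2) h4 ?_ (norm_nonneg _)
            apply div_nonneg (by linarith) (norm_nonneg _)
    have hxb : ∀ m : ℕ, ‖g^[m + 1] z‖ < T := by
      intro m
      by_contra hcon2
      push_neg at hcon2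
      have h1 := hbig _ hcon2
      have h2 : ‖φ (g^[m + 1] z)‖ ≤ r := by
        have h3 : ‖φ (g^[m + 1] z)‖ ^ d ^ (m + 1) = r := by
          rw [hrdef, ← hφg (m + 1) (by omega), norm_pow]
        by_contra h4
        push_neg at h4
        have h5 : (1:ℝ) < ‖φ (g^[m + 1] z)‖ := lt_trans hr1 h4
        have h6 : ‖φ (g^[m + 1] z)‖
            ≤ ‖φ (g^[m + 1] z)‖ ^ d ^ (m + 1) :=
          le_self_pow₀ (le_of_lt h5) (Nat.pos_of_ne_zero ?_).ne'
        · rw [h3] at h6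
          linarith
        · exact (pow_ne_zero (m + 1) (by omega : d ≠ 0))
      linarith
    -- Step 6: accumulation point and the identity theorem
    have hSinf : (Set.range (fun m : ℕ => g^[m + 1] z)).Infinite :=
      Set.infinite_range_of_injective hxinj
    have hSsub : Set.range (fun m : ℕ => g^[m + 1] z)
        ⊆ {w : ℂ | ‖c‖ ≤ ‖w‖} ∩ Metric.closedBall 0 T := by
      rintro w ⟨m, rfl⟩
      refine ⟨hgc (m + 1) (by omega), ?_⟩
      rw [Metric.mem_closedBall, Complex.dist_eq, sub_zero]
      exact le_of_lt (hxb m)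
    have hScpt : IsCompact ({w : ℂ | ‖c‖ ≤ ‖w‖} ∩ Metric.closedBall 0 T) :=
      (isCompact_closedBall (0:ℂ) T).inter_left
        (isClosed_le continuous_const continuous_norm)
    obtain ⟨lam0, hlmem, hlacc⟩ := hSinf.exists_accPt_of_subset_isCompact hScpt hSsub
    have hlmemO : lam0 ∈ {w : ℂ | R < ‖w‖} := lt_of_lt_of_le hRc hlmem.1
    have hfreq : ∃ᶠ w in nhdsWithin lam0 {lam0}ᶜ, deriv φ w = 0 := by
      have h1 := accPt_iff_frequently.1 hlacc
      rw [frequently_nhdsWithin_iff]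
      refine h1.mono ?_
      rintro w ⟨hwne, hwmem⟩
      obtain ⟨m, rfl⟩ := hwmem
      exact ⟨hφ'g (m + 1) (by omega), hwne⟩
    have hpre : IsPreconnected {w : ℂ | R < ‖w‖} := by
      have h1 : IsPreconnected ((Set.Ioi R) ×ˢ (Metric.sphere (0:ℂ) 1)) :=
        (isPreconnected_Ioi).prod
          (isPreconnected_sphere (Complex.rank_real_complex ▸ Nat.one_lt_ofNat) 0 1)
      have h2 : ((fun q : ℝ × ℂ => q.1 • q.2) '' ((Set.Ioi R) ×ˢ (Metric.sphere (0:ℂ) 1)))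
          = {w : ℂ | R < ‖w‖} := by
        ext w
        constructor
        · rintro ⟨⟨t, u⟩, ⟨ht, hu⟩, rfl⟩
          have hu1 : ‖u‖ = 1 := by
            rw [Metric.mem_sphere, Complex.dist_eq, sub_zero] at hu
            exact hu
          have htpos : (0:ℝ) < t := lt_trans (lt_trans zero_lt_one hR) ht
          have habs : ‖t • u‖ = |t| * ‖u‖ := by
            rw [norm_smul, Real.norm_eq_abs]
          simp only [Set.mem_setOf_eq, habs, hu1, mul_one, abs_of_pos htpos]
          exact ht
        · intro hw
          have hwpos : 0 < ‖w‖ := lt_trans (lt_trans zero_lt_one hR) hw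
          have hwne0 : w ≠ 0 := norm_ne_zero_iff.1 (ne_of_gt hwpos)
          refine ⟨(‖w‖, ((‖w‖)⁻¹ : ℝ) • w), ⟨hw, ?_⟩, ?_⟩
          · rw [Metric.mem_sphere, Complex.dist_eq, sub_zero,
              norm_smul, Real.norm_eq_abs,
              abs_of_pos (inv_pos.2 hwpos), inv_mul_cancel₀ (ne_of_gt hwpos)]
          · show ‖w‖ • ((‖w‖)⁻¹ : ℝ) • w = w
            rw [smul_smul, mul_inv_cancel₀ (ne_of_gt hwpos), one_smul]
      rw [← h2]
      exact h1.image _ (Continuous.continuousOn (continuous_fst.smul continuous_snd))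
    have hanal : AnalyticOnNhd ℂ (deriv φ) {w : ℂ | R < ‖w‖} :=
      (hφdiff.analyticOnNhd hopen).deriv
    have hzero : Set.EqOn (deriv φ) 0 {w : ℂ | R < ‖w‖} :=
      hanal.eqOn_zero_of_preconnected_of_frequently_eq_zero hpre hlmemO hfreq
    have hzero' : Tendsto (fun n : ℕ => deriv φ (f^[n] z)) atTop (nhds 0) := by
      have heq : (fun n : ℕ => deriv φ (f^[n] z)) = fun _ => (0:ℂ) := by
        funext n
        exact hzero (horb n)
      rw [heq]
      exact tendsto_const_nhds
    exact hb (tendsto_nhds_unique hder hzero')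
  -- ############ first limit ############
  have hder_ne : ∀ n : ℕ, 1 ≤ n →
      deriv (f^[n]) z ≠ 0 ∧ deriv φ (f^[n] z) ≠ 0 := by
    intro n hn
    have h := hstar n hn z hz (horb n)
    have hrhs : (d:ℂ)^n * (φ z) ^ (d^n - 1) * deriv φ z ≠ 0 :=
      mul_ne_zero (mul_ne_zero (pow_ne_zero _ hdCne) (pow_ne_zero _ hφzne)) hne
    rw [← h] at hrhs
    exact ⟨right_ne_zero_of_mul hrhs, left_ne_zero_of_mul hrhs⟩
  have hc0pos : 0 < ‖deriv φ z‖ := norm_pos_iff.mpr hne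
  have hdn1 : ∀ n : ℕ, (1:ℕ) ≤ d^n := fun n => Nat.one_le_pow _ _ (by omega)
  have hAid : ∀ n : ℕ, 1 ≤ n →
      Real.log (‖deriv (f^[n]) z‖) =
        (n:ℝ) * Real.log (d:ℝ) + ((d:ℝ)^n - 1) * Real.log r
          + Real.log (‖deriv φ z‖)
          - Real.log (‖deriv φ (f^[n] z)‖) := by
    intro n hn
    obtain ⟨hDne, hφ'ne⟩ := hder_ne n hn
    have habs : ‖deriv φ (f^[n] z)‖ * ‖deriv (f^[n]) z‖
        = (d:ℝ)^n * r ^ (d^n - 1) * ‖deriv φ z‖ := by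
      have h := congrArg (‖·‖) (hstar n hn z hz (horb n))
      simpa only [norm_mul, norm_pow, Complex.norm_natCast, ← hrdef] using h
    have h1 : Real.log (‖deriv φ (f^[n] z)‖)
        + Real.log (‖deriv (f^[n]) z‖)
        = Real.log ((d:ℝ)^n) + Real.log (r ^ (d^n - 1))
          + Real.log (‖deriv φ z‖) := by
      rw [← Real.log_mul (norm_ne_zero_iff.mpr hφ'ne) (norm_ne_zero_iff.mpr hDne), habs,
        Real.log_mul (mul_ne_zero (ne_of_gt (hdpos n)) (ne_of_gt (pow_pos hrpos _)))
          (norm_ne_zero_iff.mpr hne),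
        Real.log_mul (ne_of_gt (hdpos n)) (ne_of_gt (pow_pos hrpos _))]
    have h2 : Real.log ((d:ℝ)^n) = (n:ℝ) * Real.log (d:ℝ) := by
      rw [Real.log_pow]
    have h3 : Real.log (r ^ (d^n - 1)) = ((d:ℝ)^n - 1) * Real.log r := by
      rw [Real.log_pow]
      congr 1
      rw [Nat.cast_sub (hdn1 n)]
      push_cast
      ring
    rw [h2, h3] at h1
    linarith
  -- limit of each piece
  have hT1 : Tendsto (fun n : ℕ => (n:ℝ) * ((d:ℝ)^n)⁻¹) atTop (nhds 0) := by
    have h := tendsto_self_mul_const_pow_of_lt_one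
      (r := ((d:ℝ))⁻¹) (by positivity) (inv_lt_one_of_one_lt₀ hd1)
    refine h.congr (fun n => ?_)
    rw [inv_pow]
  have hT4 : Tendsto (fun n : ℕ => Real.log (‖deriv φ (f^[n] z)‖)) atTop
      (nhds (Real.log (‖b‖))) :=
    ((Real.continuousAt_log (ne_of_gt habs_b)).tendsto).comp
      ((continuous_norm.tendsto b).comp hder)
  have target1 : Tendsto (fun n : ℕ =>
      Real.log (‖deriv (f^[n]) z‖) / (d : ℝ) ^ n) atTop (nhds (Real.log r)) := by
    have h1 : Tendsto (fun n : ℕ =>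
        Real.log (d:ℝ) * ((n:ℝ) * ((d:ℝ)^n)⁻¹)
          + (Real.log r - Real.log r * ((d:ℝ)^n)⁻¹)
          + Real.log (‖deriv φ z‖) * ((d:ℝ)^n)⁻¹
          - Real.log (‖deriv φ (f^[n] z)‖) * ((d:ℝ)^n)⁻¹)
        atTop (nhds (Real.log r)) := by
      have hA : Tendsto (fun n : ℕ => Real.log (d:ℝ) * ((n:ℝ) * ((d:ℝ)^n)⁻¹)) atTop
          (nhds (Real.log (d:ℝ) * 0)) := tendsto_const_nhds.mul hT1
      have hB : Tendsto (fun n : ℕ => Real.log r - Real.log r * ((d:ℝ)^n)⁻¹) atTop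
          (nhds (Real.log r - Real.log r * 0)) := tendsto_const_nhds.sub
          (tendsto_const_nhds.mul hinvd)
      have hC : Tendsto (fun n : ℕ => Real.log (‖deriv φ z‖) * ((d:ℝ)^n)⁻¹) atTop
          (nhds (Real.log (‖deriv φ z‖) * 0)) := tendsto_const_nhds.mul hinvd
      have hD := hT4.mul hinvd
      have hE := ((hA.add hB).add hC).sub hD
      simpa using hE
    refine h1.congr' ?_
    filter_upwards [eventually_ge_atTop 1] with n hn
    rw [hAid n hn]
    have hdn : ((d:ℝ)^n) ≠ 0 := ne_of_gt (hdpos n)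
    field_simp
  exact ⟨Real.log r, target1, target2⟩
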